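/- Suppose V₀ ≥ 0 and V₀(x) → +∞ as |x| → ∞. Then for each j ∈ ℕ, the j-th eigenvalue ω_j(k) of h₀(k) = p_x² + (Bx-k)² + V₀(x) satisfies lim_{|k|→∞} ω_j(k) = +∞. -/

import Mathlib

open MeasureTheory Filter

/-- `ω` is an eigenvalue of the fibered operator `h₀(k) = p_x² + (Bx-k)² + V₀(x)`. -/
def IsEigenvalue (B : ℝ) (V₀ : ℝ → ℝ) (k ω : ℝ) : Prop :=
  ∃ φ : ℝ → ℝ, ContDiff ℝ 2 φ ∧ φ ≠ 0 ∧ Integrable (fun x => (φ x) ^ 2) ∧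
    ∀ x, -(deriv (deriv φ) x) + ((B * x - k) ^ 2 + V₀ x) * φ x = ω * φ x

/-- A nonnegative convex integrable function on ℝ is identically zero. -/
lemma convex_integrable_eq_zero (f : ℝ → ℝ) (hconv : ConvexOn ℝ Set.univ f)
    (hnonneg : ∀ x, 0 ≤ f x) (hint : Integrable f) : ∀ x, f x = 0 := by
  by_contra h
  push_neg at h
  obtain ⟨x₀, hx₀⟩ := h
  have hf0 : 0 < f x₀ := lt_of_le_of_ne (hnonneg x₀) (Ne.symm hx₀)
  -- midpoint convexity: 2 f x₀ ≤ f (x₀-1) + f (x₀+1)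
  have hmid : f x₀ ≤ (f (x₀ - 1) + f (x₀ + 1)) / 2 := by
    have := hconv.2 (Set.mem_univ (x₀ - 1)) (Set.mem_univ (x₀ + 1))
      (by norm_num : (0:ℝ) ≤ 1/2) (by norm_num : (0:ℝ) ≤ 1/2) (by norm_num)
    have hx : (1/2 : ℝ) • (x₀ - 1) + (1/2 : ℝ) • (x₀ + 1) = x₀ := by
      simp [smul_eq_mul]; ring
    rw [hx] at this
    simp only [smul_eq_mul] at this
    linarith
  -- hence one of the two neighbors is at least f x₀
  have hone : f x₀ ≤ f (x₀ + 1) ∨ f x₀ ≤ f (x₀ - 1) := by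
    by_contra hc
    push_neg at hc
    linarith [hc.1, hc.2]
  -- in either case f ≥ f x₀ on an unbounded ray, contradicting integrability
  have hkey : ∃ S : Set ℝ, volume S = ⊤ ∧ ∀ x ∈ S, f x₀ ≤ f x := by
    rcases hone with hr | hl
    · refine ⟨Set.Ioi (x₀ + 1), Real.volume_Ioi, fun x hx => ?_⟩
      have hx1 : x₀ + 1 < x := hx
      have := hconv.slope_mono_adjacent (Set.mem_univ x₀) (Set.mem_univ x)
        (by linarith : x₀ < x₀ + 1) hx1
      have h1 : (0:ℝ) ≤ (f (x₀ + 1) - f x₀) / (x₀ + 1 - x₀) := by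
        rw [show x₀ + 1 - x₀ = (1:ℝ) by ring, div_one]; linarith
      have hpos : 0 < x - (x₀ + 1) := by linarith
      have h2 := (le_div_iff₀ hpos).mp (h1.trans this)
      linarith
    · refine ⟨Set.Iio (x₀ - 1), Real.volume_Iio, fun x hx => ?_⟩
      have hx1 : x < x₀ - 1 := hx
      have := hconv.slope_mono_adjacent (Set.mem_univ x) (Set.mem_univ x₀)
        hx1 (by linarith : x₀ - 1 < x₀)
      have h1 : (f x₀ - f (x₀ - 1)) / (x₀ - (x₀ - 1)) ≤ 0 := by
        rw [show x₀ - (x₀ - 1) = (1:ℝ) by ring, div_one]; linarith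
      have h2 : (f (x₀ - 1) - f x) / (x₀ - 1 - x) ≤ 0 := this.trans h1
      have hpos : 0 < x₀ - 1 - x := by linarith
      have h3 : f (x₀ - 1) - f x ≤ 0 := by
        by_contra hcon
        push_neg at hcon
        have := div_pos hcon hpos
        linarith
      linarith
  obtain ⟨S, hSvol, hSle⟩ := hkey
  have hsub : S ⊆ {x | f x₀ ≤ ‖f x‖} := fun x hx => by
    simp only [Set.mem_setOf_eq, Real.norm_eq_abs, abs_of_nonneg (hnonneg x)]
    exact hSle x hx
  have := (measure_mono hsub).trans_lt (hint.measure_norm_ge_lt_top hf0)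
  rw [hSvol] at this
  exact absurd this (by simp)

/-- An eigenvalue must exceed the potential somewhere. -/
lemma eig_exists_lt (B : ℝ) (V₀ : ℝ → ℝ) (k ω : ℝ) (h : IsEigenvalue B V₀ k ω) :
    ∃ x, (B * x - k) ^ 2 + V₀ x < ω := by
  by_contra hc
  push_neg at hc
  obtain ⟨φ, hsm, hne, hint, hode⟩ := h
  set f : ℝ → ℝ := fun x => φ x ^ 2 with hf
  have hφdiff : Differentiable ℝ φ := hsm.differentiable (by norm_num)
  have hφ'cd : ContDiff ℝ 1 (deriv φ) := (contDiff_succ_iff_deriv.mp (show ContDiff ℝ (1+1) φ by exact_mod_cast hsm)).2.2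
  have hφ'diff : Differentiable ℝ (deriv φ) := hφ'cd.differentiable one_ne_zero
  have hd1 : ∀ x, HasDerivAt f (2 * φ x * deriv φ x) x := by
    intro x
    have := ((hφdiff x).hasDerivAt).fun_pow 2
    simpa using this
  have hderivf : deriv f = fun x => 2 * φ x * deriv φ x := funext fun x => (hd1 x).deriv
  have hd2 : ∀ x, HasDerivAt (deriv f)
      (2 * (deriv φ x) ^ 2 + 2 * φ x * deriv (deriv φ) x) x := by
    intro x
    rw [hderivf]
    have h1 : HasDerivAt (fun y => 2 * φ y) (2 * deriv φ x) x :=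
      ((hφdiff x).hasDerivAt).const_mul 2
    have h2 : HasDerivAt (deriv φ) (deriv (deriv φ) x) x := (hφ'diff x).hasDerivAt
    have := h1.fun_mul h2
    exact this.congr_deriv (by ring)
  have hφ'' : ∀ x, deriv (deriv φ) x = ((B * x - k) ^ 2 + V₀ x - ω) * φ x := by
    intro x
    have := hode x
    linarith [this]
  have hconv : ConvexOn ℝ Set.univ f := by
    apply convexOn_of_deriv2_nonneg' convex_univ
    · exact fun x _ => (hd1 x).differentiableAt.differentiableWithinAt
    · exact fun x _ => (hd2 x).differentiableAt.differentiableWithinAt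
    · intro x _
      have hit : deriv^[2] f x = deriv (deriv f) x := rfl
      rw [hit, (hd2 x).deriv, hφ'' x]
      have hWω : 0 ≤ (B * x - k) ^ 2 + V₀ x - ω := by linarith [hc x]
      nlinarith [sq_nonneg (deriv φ x), sq_nonneg (φ x)]
  have hzero : ∀ x, f x = 0 :=
    convex_integrable_eq_zero f hconv (fun x => sq_nonneg _) hint
  apply hne
  funext x
  have := hzero x
  simpa [hf, pow_eq_zero_iff] using this

/-- If `V₀ ≥ 0` and `V₀(x) → +∞` as `|x| → ∞`, then each dispersion curve of
`h₀(k)` satisfies `ω_j(k) → +∞` as `|k| → ∞`. -/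
theorem dispersion_curve_limit_unbounded (B : ℝ) (hB : 0 < B) (V₀ : ℝ → ℝ)
    (hVnonneg : ∀ x, 0 ≤ V₀ x)
    (hVlim : Tendsto V₀ (cocompact ℝ) atTop)
    (ω : ℕ → ℝ → ℝ)
    (hmono : ∀ k, StrictMono (fun j => ω j k))
    (heig : ∀ j k, IsEigenvalue B V₀ k (ω j k))
    (hexh : ∀ k e, IsEigenvalue B V₀ k e → ∃ j, e = ω j k)
    (j : ℕ) :
    Tendsto (fun k => ω j k) (cocompact ℝ) atTop := by
  rw [tendsto_atTop]
  intro M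
  -- get K compact such that V₀ x ≥ max M 0 outside K
  have hev : ∀ᶠ x in cocompact ℝ, max M 0 ≤ V₀ x := hVlim.eventually (eventually_ge_atTop _)
  obtain ⟨K, hK, hKsub⟩ := hasBasis_cocompact.eventually_iff.mp hev
  obtain ⟨R, hR⟩ := hK.isBounded.subset_closedBall 0
  set R' : ℝ := max R 0 with hR'
  set M' : ℝ := max M 0 with hM'
  set C : ℝ := B * R' + Real.sqrt M' with hC
  have hM'0 : 0 ≤ M' := le_max_right _ _
  have hR'0 : 0 ≤ R' := le_max_right _ _
  have key : ∀ k : ℝ, C ≤ |k| → M ≤ ω j k := by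
    intro k hk
    have hpot : ∀ x, M' ≤ (B * x - k) ^ 2 + V₀ x := by
      intro x
      rcases le_or_gt |x| R' with hx | hx
      · have h1 : Real.sqrt M' ≤ |B * x - k| := by
          have : |B * x| ≤ B * R' := by
            rw [abs_mul, abs_of_pos hB]
            exact mul_le_mul_of_nonneg_left hx hB.le
          have h2 := abs_sub_abs_le_abs_sub k (B * x)
          have h3 : |k - B * x| = |B * x - k| := abs_sub_comm _ _
          calc Real.sqrt M' = C - B * R' := by rw [hC]; ring
          _ ≤ |k| - |B * x| := by
            have := hk; linarith
          _ ≤ |k - B * x| := h2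
          _ = |B * x - k| := h3
        have h4 : M' ≤ (B * x - k) ^ 2 := by
          have := pow_le_pow_left₀ (Real.sqrt_nonneg M') h1 2
          rwa [Real.sq_sqrt hM'0, sq_abs] at this
        linarith [hVnonneg x]
      · have hxK : x ∈ Kᶜ := by
          intro hxK
          have := hR hxK
          rw [Metric.mem_closedBall, Real.dist_eq, sub_zero] at this
          have : |x| ≤ R' := this.trans (le_max_left _ _)
          linarith
        have := hKsub hxK
        nlinarith [sq_nonneg (B * x - k)]
    obtain ⟨x, hx⟩ := eig_exists_lt B V₀ k (ω j k) (heig j k)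
    have := hpot x
    have hMM' : M ≤ M' := le_max_left _ _
    linarith
  rw [cocompact_eq_atBot_atTop]
  rw [eventually_sup]
  constructor
  · filter_upwards [eventually_le_atBot (-C)] with k hk
    apply key
    have hC0 : 0 ≤ C := by positivity
    rw [abs_of_nonpos (by linarith)]
    linarith
  · filter_upwards [eventually_ge_atTop C] with k hk
    apply key
    have hC0 : 0 ≤ C := by positivity
    rw [abs_of_nonneg (by linarith)]
    exact hk
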